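/- Let U be an irreducible almost upper triangular transition matrix on ℕ (irreducibility forces U j (j−1) > 0 for every j ≥ 1, since −1 steps are the only downward moves). Define π 0 = 1 and, for a ≥ 1, π a = det(Id − U_{[0,a−1]}) / ∏_{j=1}^{a} U j (j−1). Then π a > 0 for every a, and π is an invariant measure for U: for every b ∈ ℕ, ∑_{a} π a · U a b = π b (the sum has only the finitely many nonzero terms a ≤ b+1). -/

import Mathlib

/-- `detOneSub U n = det(Id − U_{[0,n−1]})`, with `detOneSub U 0 = 1`. -/
noncomputable def detOneSub (U : ℕ → ℕ → ℝ) (n : ℕ) : ℝ :=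
  Matrix.det (1 - Matrix.of fun i j : Fin n => U i.1 j.1)

/-- Irreducibility of a matrix on `ℕ`: any state can be reached from any other through
a path of positive transitions. -/
def MatIrreducible (M : ℕ → ℕ → ℝ) : Prop :=
  ∀ i j : ℕ, ∃ (n : ℕ) (x : ℕ → ℕ), 0 < n ∧ x 0 = i ∧ x n = j ∧
    ∀ k, k < n → 0 < M (x k) (x (k + 1))

open Matrix Finset

section Aux

variable (U : ℕ → ℕ → ℝ)

/-- The finite block `Id - U_{[0,n-1]}`. -/
private noncomputable def Ablk (n : ℕ) : Matrix (Fin n) (Fin n) ℝ :=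
  1 - Matrix.of fun i j : Fin n => U i.1 j.1

private lemma Ablk_apply {n : ℕ} (i j : Fin n) :
    Ablk U n i j = (if (i : ℕ) = (j : ℕ) then 1 else 0) - U i j := by
  simp [Ablk, Matrix.one_apply, Fin.ext_iff]

private lemma detOneSub_eq (n : ℕ) : detOneSub U n = (Ablk U n).det := rfl

private lemma val_succAbove {n : ℕ} (p : Fin (n + 1)) (i : Fin n) :
    (p.succAbove i : ℕ) = if (i : ℕ) < (p : ℕ) then (i : ℕ) else (i : ℕ) + 1 := by
  rcases lt_or_ge (i : ℕ) (p : ℕ) with h | h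
  · rw [Fin.succAbove_of_castSucc_lt _ _ (by simpa [Fin.lt_def] using h), if_pos h,
      Fin.coe_castSucc]
  · rw [Fin.succAbove_of_le_castSucc _ _ (by simpa [Fin.le_def] using h),
      if_neg (not_lt.2 h), Fin.val_succ]

/-- Cofactor along the last column of the Hessenberg block matrix. -/
private lemma det_minor (hut : ∀ i j, j + 1 < i → U i j = 0) :
    ∀ (n : ℕ) (a : Fin (n + 1)),
      ((Ablk U (n + 1)).submatrix a.succAbove Fin.castSucc).det
        = detOneSub U a * ∏ j ∈ Finset.Ioc (a : ℕ) n, (-U j (j - 1)) := by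
  intro n
  induction n with
  | zero =>
    intro a
    have ha : (a : ℕ) = 0 := by omega
    rw [ha]
    simp [detOneSub, Matrix.det_fin_zero]
  | succ n IH =>
    intro a
    refine Fin.lastCases ?_ ?_ a
    · -- a = last, minor is the principal block
      have hsub : (Ablk U (n + 2)).submatrix (Fin.last (n + 1)).succAbove Fin.castSucc
          = Ablk U (n + 1) := by
        ext i j
        simp only [Matrix.submatrix_apply, Fin.succAbove_last, Ablk_apply, Fin.coe_castSucc]
      rw [hsub]
      simp [detOneSub_eq]
    · intro a'
      set B := (Ablk U (n + 2)).submatrix (a'.castSucc).succAbove Fin.castSucc with hB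
      have h1 : (((a'.castSucc).succAbove (Fin.last n) : Fin (n+2)) : ℕ) = n + 1 := by
        rw [val_succAbove]
        have : ¬ ((Fin.last n : ℕ) < ((a'.castSucc : Fin (n+2)) : ℕ)) := by
          simp only [Fin.val_last, Fin.coe_castSucc]
          have := a'.2; omega
        rw [if_neg this]; simp
      have hlastrow : ∀ j : Fin (n + 1), j ≠ Fin.last n → B (Fin.last n) j = 0 := by
        intro j hj
        have hjlt : (j : ℕ) < n := by
          rcases lt_or_eq_of_le (Nat.lt_succ_iff.mp j.2) with h | h
          · exact h
          · exact absurd (Fin.ext h : j = Fin.last n) hj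
        simp only [hB, Matrix.submatrix_apply, Ablk_apply]
        rw [h1, Fin.coe_castSucc]
        rw [if_neg (by omega), hut _ _ (by omega)]
        ring
      have hlastlast : B (Fin.last n) (Fin.last n) = -U (n + 1) n := by
        simp only [hB, Matrix.submatrix_apply, Ablk_apply]
        rw [h1]
        simp
      have hminor : B.submatrix Fin.castSucc Fin.castSucc
          = (Ablk U (n + 1)).submatrix a'.succAbove Fin.castSucc := by
        ext i j
        simp only [hB, Matrix.submatrix_apply, Ablk_apply, Fin.coe_castSucc]
        have hval : (((a'.castSucc).succAbove (i.castSucc) : Fin (n+2)) : ℕ)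
            = ((a'.succAbove i : Fin (n+1)) : ℕ) := by
          rw [val_succAbove, val_succAbove, Fin.coe_castSucc, Fin.coe_castSucc]
        rw [hval]
      have hexp : B.det = ∑ j : Fin (n + 1),
          (-1) ^ ((Fin.last n : ℕ) + (j : ℕ)) * B (Fin.last n) j *
            (B.submatrix (Fin.last n).succAbove j.succAbove).det :=
        Matrix.det_succ_row B (Fin.last n)
      rw [hexp, Finset.sum_eq_single (Fin.last n)]
      · rw [hlastlast]
        simp only [Fin.succAbove_last, Fin.val_last]
        rw [hminor, IH a']
        have hsplit : ∏ j ∈ Finset.Ioc ((a'.castSucc : Fin (n+2)) : ℕ) (n + 1), (-U j (j - 1))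
            = (∏ j ∈ Finset.Ioc ((a' : Fin (n+1)) : ℕ) n, (-U j (j - 1))) * (-U (n + 1) n) := by
          rw [Fin.coe_castSucc, Finset.prod_Ioc_succ_top (by omega)]
          norm_num
        rw [hsplit]
        rw [show detOneSub U ((a'.castSucc : Fin (n+2)) : ℕ) = detOneSub U (a' : ℕ) from by
          rw [Fin.coe_castSucc]]
        have hs : (-1 : ℝ) ^ (n + n) = 1 := by
          rw [← two_mul, pow_mul]; norm_num
        rw [hs]
        ring
      · intro j _ hj
        rw [hlastrow j hj]; ring
      · intro h
        exact absurd (Finset.mem_univ _) h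

/-- The determinant recurrence coming from expansion along the last column. -/
private lemma detOneSub_succ (hut : ∀ i j, j + 1 < i → U i j = 0) (n : ℕ) :
    detOneSub U (n + 1) = detOneSub U n
      - ∑ a ∈ Finset.range (n + 1),
          U a n * (detOneSub U a * ∏ j ∈ Finset.Ioc a n, U j (j - 1)) := by
  have hexp : detOneSub U (n + 1) = ∑ i : Fin (n + 1),
      (-1) ^ ((i : ℕ) + (Fin.last n : ℕ)) * (Ablk U (n+1)) i (Fin.last n) *
        ((Ablk U (n+1)).submatrix i.succAbove Fin.castSucc).det := by
    rw [detOneSub_eq, Matrix.det_succ_column (Ablk U (n+1)) (Fin.last n)]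
    simp [Fin.succAbove_last]
  rw [hexp]
  have hterm : ∀ i : Fin (n + 1),
      (-1 : ℝ) ^ ((i : ℕ) + (Fin.last n : ℕ)) * (Ablk U (n+1)) i (Fin.last n) *
        ((Ablk U (n+1)).submatrix i.succAbove Fin.castSucc).det
      = (if (i : ℕ) = n then 1 else 0) *
            (detOneSub U (i : ℕ) * ∏ j ∈ Finset.Ioc (i : ℕ) n, U j (j - 1))
        - U (i : ℕ) n * (detOneSub U (i : ℕ) * ∏ j ∈ Finset.Ioc (i : ℕ) n, U j (j - 1)) := by
    intro i
    rw [det_minor U hut n i, Ablk_apply]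
    have hprodneg : ∏ j ∈ Finset.Ioc (i : ℕ) n, (-U j (j - 1))
        = (-1 : ℝ) ^ (n - (i : ℕ)) * ∏ j ∈ Finset.Ioc (i : ℕ) n, U j (j - 1) := by
      rw [← Nat.card_Ioc (i : ℕ) n, ← Finset.prod_const (-1 : ℝ), ← Finset.prod_mul_distrib]
      exact Finset.prod_congr rfl fun j _ => by ring
    have hi : (i : ℕ) ≤ n := Nat.lt_succ_iff.mp i.2
    have hsign : (-1 : ℝ) ^ ((i : ℕ) + n) * (-1 : ℝ) ^ (n - (i : ℕ)) = 1 := by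
      rw [← pow_add, show (i : ℕ) + n + (n - (i : ℕ)) = 2 * n from by omega, pow_mul]
      norm_num
    rw [Fin.val_last, hprodneg]
    linear_combination (((if (i : ℕ) = n then 1 else 0) - U (i : ℕ) n) * detOneSub U (i : ℕ) *
      (∏ j ∈ Finset.Ioc (i : ℕ) n, U j (j - 1))) * hsign
  rw [Finset.sum_congr rfl fun i _ => hterm i]
  rw [Finset.sum_sub_distrib]
  congr 1
  · rw [Fin.sum_univ_eq_sum_range (fun a =>
      (if a = n then 1 else 0) * (detOneSub U a * ∏ j ∈ Finset.Ioc a n, U j (j - 1)))]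
    simp only [ite_mul, one_mul, zero_mul]
    rw [Finset.sum_ite_eq' (Finset.range (n+1)) n
      (fun a => detOneSub U a * ∏ j ∈ Finset.Ioc a n, U j (j - 1))]
    simp
  · exact Fin.sum_univ_eq_sum_range (fun a =>
      U a n * (detOneSub U a * ∏ j ∈ Finset.Ioc a n, U j (j - 1))) (n+1) ▸ rfl

/-- the subdiagonal entries are positive -/
private lemma down_pos (hnn : ∀ i j, 0 ≤ U i j) (hut : ∀ i j, j + 1 < i → U i j = 0)
    (hirr : MatIrreducible U) (m : ℕ) : 0 < U (m + 1) m := by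
  have cross : ∀ (n : ℕ) (x : ℕ → ℕ) (m : ℕ),
      (∀ k, k < n → 0 < U (x k) (x (k + 1))) → m ≤ x 0 → x n < m → 0 < U m (m - 1) := by
    intro n
    induction n with
    | zero => intro x m _ h1 h2; omega
    | succ n IH =>
      intro x m hpos h1 h2
      rcases lt_or_ge (x 1) m with h | h
      · have hp : 0 < U (x 0) (x 1) := hpos 0 (Nat.succ_pos n)
        have hle : x 1 + 1 ≥ x 0 := by
          by_contra hc
          exact absurd (hut _ _ (by omega)) (ne_of_gt hp)
        have hx0 : x 0 = m := by omega
        have hx1 : x 1 = m - 1 := by omega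
        rwa [hx0, hx1] at hp
      · exact IH (fun k => x (k + 1)) m (fun k hk => hpos (k + 1) (by omega)) h h2
  obtain ⟨n, x, hn, hx0, hxn, hpos⟩ := hirr (m + 1) m
  have := cross n x (m + 1) hpos (by omega) (by omega)
  simpa using this

/-- positivity of the determinants -/
private lemma det_pos (hnn : ∀ i j, 0 ≤ U i j) (hrow : ∀ i, HasSum (fun j => U i j) 1)
    (hut : ∀ i j, j + 1 < i → U i j = 0) (hirr : MatIrreducible U) (n : ℕ) :
    0 < detOneSub U n := by
  set M : Matrix (Fin n) (Fin n) ℝ := Matrix.of fun i j : Fin n => U i.1 j.1 with hM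
  have key : ∀ t : ℝ, 0 ≤ t → t ≤ 1 → (1 - t • M).det ≠ 0 := by
    intro t ht0 ht1 hdet
    obtain ⟨v, hv0, hveq⟩ := (Matrix.exists_mulVec_eq_zero_iff).2 hdet
    have hvt : ∀ i, v i = t * ∑ j : Fin n, U i.1 j.1 * v j := by
      intro i
      have := congrFun hveq i
      simp only [Matrix.sub_mulVec, Matrix.one_mulVec, Matrix.smul_mulVec,
        Pi.sub_apply, Pi.smul_apply, smul_eq_mul] at this
      have h2 : v i - t * (M.mulVec v i) = 0 := this
      have h3 : M.mulVec v i = ∑ j : Fin n, U i.1 j.1 * v j := by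
        simp [Matrix.mulVec, dotProduct, hM]
      rw [h3] at h2
      linarith
    -- pick a maximizer of |v|
    obtain ⟨i1, hi1⟩ := Function.ne_iff.1 hv0
    obtain ⟨i0, -, hmax⟩ := Finset.exists_max_image Finset.univ (fun i => |v i|)
      ⟨i1, Finset.mem_univ i1⟩
    set m := |v i0| with hm
    have hmpos : 0 < m := lt_of_lt_of_le (abs_pos.2 hi1) (hmax i1 (Finset.mem_univ i1))
    have rowsum_le : ∀ (i : ℕ) (s : Finset ℕ), (∑ j ∈ s, U i j) ≤ 1 :=
      fun i s => sum_le_hasSum s (fun j _ => hnn i j) (hrow i)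
    have key2 : ∀ i : Fin n, |v i| = m → ∀ j : ℕ, 0 < U i.1 j →
        ∃ h : j < n, |v ⟨j, h⟩| = m := by
      intro i hi j hUj
      by_contra hcon
      push_neg at hcon
      -- basic bound : m ≤ t * ∑ U i j' |v j'|
      have hb1 : m ≤ t * ∑ j' : Fin n, U i.1 j'.1 * |v j'| := by
        calc m = |v i| := hi.symm
          _ = |t * ∑ j' : Fin n, U i.1 j'.1 * v j'| := by rw [hvt i]
          _ = t * |∑ j' : Fin n, U i.1 j'.1 * v j'| := by
              rw [abs_mul, abs_of_nonneg ht0]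
          _ ≤ t * ∑ j' : Fin n, |U i.1 j'.1 * v j'| :=
              mul_le_mul_of_nonneg_left (Finset.abs_sum_le_sum_abs _ _) ht0
          _ = t * ∑ j' : Fin n, U i.1 j'.1 * |v j'| := by
              congr 1
              exact Finset.sum_congr rfl fun j' _ => by
                rw [abs_mul, abs_of_nonneg (hnn _ _)]
      have hblocksum : (∑ j' : Fin n, U i.1 j'.1) = ∑ j' ∈ Finset.range n, U i.1 j' :=
        Fin.sum_univ_eq_sum_range (fun j' => U i.1 j') n
      rcases lt_or_ge j n with hjn | hjn
      · -- j < n but |v j| < m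
        have hvj : |v ⟨j, hjn⟩| < m :=
          lt_of_le_of_ne (hmax _ (Finset.mem_univ _)) (fun h => hcon hjn h)
        have hstrict : (∑ j' : Fin n, U i.1 j'.1 * |v j'|) < m := by
          have h1 : (∑ j' : Fin n, U i.1 j'.1 * |v j'|) < ∑ j' : Fin n, U i.1 j'.1 * m := by
            refine Finset.sum_lt_sum (fun j' _ =>
              mul_le_mul_of_nonneg_left (hmax j' (Finset.mem_univ j')) (hnn _ _))
              ⟨⟨j, hjn⟩, Finset.mem_univ _, ?_⟩
            exact mul_lt_mul_of_pos_left hvj hUj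
          have h2 : (∑ j' : Fin n, U i.1 j'.1 * m) ≤ m := by
            rw [← Finset.sum_mul]
            calc (∑ j' : Fin n, U i.1 j'.1) * m ≤ 1 * m := by
                  apply mul_le_mul_of_nonneg_right _ hmpos.le
                  rw [hblocksum]; exact rowsum_le i.1 _
              _ = m := one_mul m
          linarith
        have hsumnn : 0 ≤ ∑ j' : Fin n, U i.1 j'.1 * |v j'| :=
          Finset.sum_nonneg fun j' _ => mul_nonneg (hnn _ _) (abs_nonneg _)
        nlinarith
      · -- j outside the block
        have hless : (∑ j' ∈ Finset.range n, U i.1 j') ≤ 1 - U i.1 j := by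
          have := rowsum_le i.1 (insert j (Finset.range n))
          rw [Finset.sum_insert (by simp; omega)] at this
          linarith
        have hb2 : (∑ j' : Fin n, U i.1 j'.1 * |v j'|) ≤ m * (1 - U i.1 j) := by
          calc (∑ j' : Fin n, U i.1 j'.1 * |v j'|) ≤ ∑ j' : Fin n, U i.1 j'.1 * m :=
                Finset.sum_le_sum fun j' _ =>
                  mul_le_mul_of_nonneg_left (hmax j' (Finset.mem_univ j')) (hnn _ _)
            _ = (∑ j' : Fin n, U i.1 j'.1) * m := by rw [Finset.sum_mul]
            _ ≤ (1 - U i.1 j) * m := by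
                apply mul_le_mul_of_nonneg_right _ hmpos.le
                rw [hblocksum]; exact hless
            _ = m * (1 - U i.1 j) := mul_comm _ _
        have hsumnn : 0 ≤ ∑ j' : Fin n, U i.1 j'.1 * |v j'| :=
          Finset.sum_nonneg fun j' _ => mul_nonneg (hnn _ _) (abs_nonneg _)
        have hts : t * (∑ j' : Fin n, U i.1 j'.1 * |v j'|)
            ≤ ∑ j' : Fin n, U i.1 j'.1 * |v j'| := by nlinarith
        nlinarith
    -- follow an irreducibility path from i0 out of the block
    obtain ⟨len, x, hlen, hx0, hxn, hstep⟩ := hirr i0.1 n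
    have hall : ∀ k, k ≤ len → ∃ h : x k < n, |v ⟨x k, h⟩| = m := by
      intro k
      induction k with
      | zero =>
        intro _
        have h0 : x 0 < n := by rw [hx0]; exact i0.2
        refine ⟨h0, ?_⟩
        have he : (⟨x 0, h0⟩ : Fin n) = i0 := by ext; simp [hx0]
        rw [he]
      | succ k ih =>
        intro hk
        obtain ⟨h, hmk⟩ := ih (by omega)
        exact key2 ⟨x k, h⟩ hmk (x (k + 1)) (hstep k (by omega))
    obtain ⟨h, -⟩ := hall len le_rfl
    rw [hxn] at h
    exact lt_irrefl n h
  have hcont : Continuous fun t : ℝ => (1 - t • M).det := by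
    exact (Continuous.sub continuous_const (continuous_id.smul continuous_const)).matrix_det
  have hf0 : (1 - (0 : ℝ) • M).det = 1 := by simp
  have hf1 : detOneSub U n = (1 - (1 : ℝ) • M).det := by
    rw [one_smul]; rfl
  rw [hf1]
  by_contra hle
  push_neg at hle
  have hlt : (1 - (1 : ℝ) • M).det < 0 :=
    lt_of_le_of_ne hle (key 1 zero_le_one le_rfl)
  have hsub : Set.Icc ((1 - (1:ℝ) • M).det) ((1 - (0:ℝ) • M).det) ⊆
      (fun t : ℝ => (1 - t • M).det) '' Set.Icc 0 1 :=
    intermediate_value_Icc' zero_le_one hcont.continuousOn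
  have h0mem : (0 : ℝ) ∈ Set.Icc ((1 - (1:ℝ) • M).det) ((1 - (0:ℝ) • M).det) := by
    rw [hf0]; exact ⟨hlt.le, zero_le_one⟩
  obtain ⟨t, ht, htz⟩ := hsub h0mem
  exact key t ht.1 ht.2 htz

end Aux

/-- Theorem 2.1 (existence part): an irreducible almost upper triangular transition
matrix `U` admits the positive invariant measure
`π a = det(Id − U_{[0,a−1]}) / ∏_{j=1}^a U j (j−1)` (so `π 0 = 1`). -/
theorem invariant_measure_almost_upper_triangular (U : ℕ → ℕ → ℝ)
    (hnn : ∀ i j, 0 ≤ U i j)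
    (hrow : ∀ i, HasSum (fun j => U i j) 1)
    (hut : ∀ i j, j + 1 < i → U i j = 0)
    (hirr : MatIrreducible U)
    (pi : ℕ → ℝ)
    (hpi : ∀ a, pi a = detOneSub U a / ∏ j ∈ Finset.Icc 1 a, U j (j - 1)) :
    (∀ a, 0 < pi a) ∧ ∀ b, HasSum (fun a => pi a * U a b) (pi b) := by
  have hdown := down_pos U hnn hut hirr
  have hdet := det_pos U hnn hrow hut hirr
  -- products
  have hQpos : ∀ a b : ℕ, 0 < ∏ j ∈ Finset.Ioc a b, U j (j - 1) := by
    intro a b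
    refine Finset.prod_pos fun j hj => ?_
    have hj1 : 1 ≤ j := by
      rw [Finset.mem_Ioc] at hj; omega
    have := hdown (j - 1)
    rwa [show j - 1 + 1 = j from by omega] at this
  have hPI : ∀ a : ℕ, (∏ j ∈ Finset.Icc 1 a, U j (j - 1)) = ∏ j ∈ Finset.Ioc 0 a, U j (j - 1) := by
    intro a; rw [← Finset.Icc_add_one_left_eq_Ioc]; rfl
  have hpos : ∀ a, 0 < pi a := by
    intro a
    rw [hpi a, hPI a]
    exact div_pos (hdet a) (hQpos 0 a)
  refine ⟨hpos, fun b => ?_⟩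
  have hzero : ∀ a ∉ Finset.range (b + 2), pi a * U a b = 0 := by
    intro a ha
    rw [Finset.mem_range, not_lt] at ha
    rw [hut a b (by omega), mul_zero]
  have hsum := hasSum_sum_of_ne_finset_zero (L := SummationFilter.unconditional ℕ) hzero
  have hval : (∑ a ∈ Finset.range (b + 2), pi a * U a b) = pi b := by
    have hterm : ∀ a ∈ Finset.range (b + 2), pi a * U a b
        = detOneSub U a * (∏ j ∈ Finset.Ioc a (b + 1), U j (j - 1)) * U a b
            / ∏ j ∈ Finset.Ioc 0 (b + 1), U j (j - 1) := by
      intro a ha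
      rw [Finset.mem_range] at ha
      rw [hpi a, hPI a]
      rw [show (∏ j ∈ Finset.Ioc 0 (b+1), U j (j - 1))
          = (∏ j ∈ Finset.Ioc 0 a, U j (j - 1)) * ∏ j ∈ Finset.Ioc a (b+1), U j (j - 1) from
        (Finset.prod_Ioc_consecutive _ (Nat.zero_le a) (by omega)).symm]
      have h1 : (∏ j ∈ Finset.Ioc 0 a, U j (j - 1)) ≠ 0 := ne_of_gt (hQpos 0 a)
      have h2 : (∏ j ∈ Finset.Ioc a (b + 1), U j (j - 1)) ≠ 0 := ne_of_gt (hQpos a (b + 1))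
      field_simp
    rw [Finset.sum_congr rfl hterm, ← Finset.sum_div]
    have hnum : (∑ a ∈ Finset.range (b + 2),
        detOneSub U a * (∏ j ∈ Finset.Ioc a (b + 1), U j (j - 1)) * U a b)
        = detOneSub U b * U (b + 1) b := by
      rw [Finset.sum_range_succ]
      have hlast : detOneSub U (b+1) * (∏ j ∈ Finset.Ioc (b+1) (b+1), U j (j - 1)) * U (b+1) b
          = detOneSub U (b + 1) * U (b + 1) b := by simp
      have hsplit : ∀ a ∈ Finset.range (b + 1),
          detOneSub U a * (∏ j ∈ Finset.Ioc a (b + 1), U j (j - 1)) * U a b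
          = U a b * (detOneSub U a * ∏ j ∈ Finset.Ioc a b, U j (j - 1)) * U (b + 1) b := by
        intro a ha
        rw [Finset.mem_range] at ha
        rw [Finset.prod_Ioc_succ_top (by omega : a ≤ b),
          show b + 1 - 1 = b from rfl]
        ring
      rw [hlast, Finset.sum_congr rfl hsplit, ← Finset.sum_mul]
      have := detOneSub_succ U hut b
      have hrec : (∑ a ∈ Finset.range (b + 1),
          U a b * (detOneSub U a * ∏ j ∈ Finset.Ioc a b, U j (j - 1)))
          = detOneSub U b - detOneSub U (b + 1) := by linarith
      rw [hrec]
      ring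
    rw [hnum, hpi b, hPI b]
    rw [show (∏ j ∈ Finset.Ioc 0 (b+1), U j (j - 1))
        = (∏ j ∈ Finset.Ioc 0 b, U j (j - 1)) * U (b + 1) b from by
      rw [Finset.prod_Ioc_succ_top (Nat.zero_le b), show b + 1 - 1 = b from rfl]]
    rw [div_mul_eq_div_div_swap]
    rw [mul_div_assoc, div_self (ne_of_gt (hdown b)), mul_one]
  rwa [hval] at hsum
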